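/- Let n ≥ 2, m ≥ n, and 1 ≤ i < j ≤ n with j − i ≤ m − n and m < 2n + 2. Then √(I_m^i + I_m^j) = ⋂_{u=0}^{m−n−(j−i)} L_{j+u, m−j−u+1, 2}, the ideals L_{j+u, m−j−u+1, 2} (0 ≤ u ≤ m−n−(j−i)) are prime, and none of them contains another; consequently Z_m^i ∩ Z_m^j = ⋃_{u=0}^{m−n−(j−i)} V(L_{j+u, m−j−u+1, 2}) is the irreducible decomposition of Z_m^i ∩ Z_m^j. -/

import Mathlib

noncomputable section

open MvPolynomial

/-- `R N = ℂ[x_0,…,x_N, y_0,…,y_N, z_0,…,z_N]`. -/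
abbrev R (N : ℕ) : Type := MvPolynomial (Fin 3 × Fin (N + 1)) ℂ

/-- the variable `x_i` (for `i ≤ N`). -/
def Xv (N i : ℕ) : R N := if h : i < N + 1 then X (0, ⟨i, h⟩) else 0
/-- the variable `y_i` (for `i ≤ N`). -/
def Yv (N i : ℕ) : R N := if h : i < N + 1 then X (1, ⟨i, h⟩) else 0
/-- the variable `z_i` (for `i ≤ N`). -/
def Zv (N i : ℕ) : R N := if h : i < N + 1 then X (2, ⟨i, h⟩) else 0

/-- `Σ_{i=p}^N x_i t^i`. -/
def xSer (N p : ℕ) : Polynomial (R N) :=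
  ∑ i ∈ Finset.Icc p N, Polynomial.C (Xv N i) * Polynomial.X ^ i
/-- `Σ_{i=q}^N y_i t^i`. -/
def ySer (N q : ℕ) : Polynomial (R N) :=
  ∑ i ∈ Finset.Icc q N, Polynomial.C (Yv N i) * Polynomial.X ^ i
/-- `Σ_{i=r}^N z_i t^i`. -/
def zSer (N r : ℕ) : Polynomial (R N) :=
  ∑ i ∈ Finset.Icc r N, Polynomial.C (Zv N i) * Polynomial.X ^ i

/-- `f_{pqr}^{(j)}`: the coefficient of `t^j` in
`f(Σ_{i=p}^N x_i t^i, Σ_{i=q}^N y_i t^i, Σ_{i=r}^N z_i t^i)` where `f = xy - z^{n+1}`. -/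
def fpqr (N n p q r j : ℕ) : R N :=
  (xSer N p * ySer N q - zSer N r ^ (n + 1)).coeff j


/-- The ideal `L_{pqr} = ⟨x_0,…,x_{p−1}, y_0,…,y_{q−1}, z_0,…,z_{r−1}⟩`. -/
def Lpqr (N p q r : ℕ) : Ideal (R N) :=
  Ideal.span ((Xv N '' Set.Iio p) ∪ (Yv N '' Set.Iio q) ∪ (Zv N '' Set.Iio r))

/-- The substitution `x_i ↦ x_{l+i}`, `y_i ↦ y_{e(n+1)−l+i}`, `z_i ↦ z_{e+i}`. -/
def shiftSub (N n l e : ℕ) : Fin 3 × Fin (N + 1) → R N := fun v =>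
  if v.1 = 0 then Xv N (l + (v.2 : ℕ))
  else if v.1 = 1 then Yv N (e * (n + 1) - l + (v.2 : ℕ))
  else Zv N (e + (v.2 : ℕ))

/-- `g_{l,e}^{(j)}`: obtained from `f^{(j)} = f_{000}^{(j)}` by the substitution
`x_i ↦ x_{l+i}`, `y_i ↦ y_{e(n+1)−l+i}`, `z_i ↦ z_{e+i}`. -/
def gle (N n l e j : ℕ) : R N := aeval (shiftSub N n l e) (fpqr N n 0 0 0 j)

/-- The ideal `⟨f^{(0)},…,f^{(m)}⟩` of `R_m`. -/
def Fideal (m n : ℕ) : Ideal (R m) :=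
  Ideal.span {g | ∃ j ≤ m, g = fpqr m n 0 0 0 j}

/-- `I_m^l = L_{l,n+1−l,1} + ⟨f^{(0)},…,f^{(m)}⟩`. -/
def Iml (m n l : ℕ) : Ideal (R m) := Lpqr m l (n + 1 - l) 1 ⊔ Fideal m n

/-- `G_m^l = ⟨g_{l,1}^{(0)},…,g_{l,1}^{(m−n−1)}⟩` (the zero ideal when `m = n`). -/
def Gml (m n l : ℕ) : Ideal (R m) :=
  Ideal.span {g | ∃ j < m - n, g = gle m n l 1 j}

/-- Points of `ℂ^{3(m+1)}`. -/
abbrev Pt (m : ℕ) := Fin 3 × Fin (m + 1) → ℂ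

/-- The zero locus in `ℂ^{3(m+1)}` of an ideal of `R_m`. -/
def zl (m : ℕ) (I : Ideal (R m)) : Set (Pt m) := {x | ∀ g ∈ I, eval x g = 0}

/-- `Z_m^l ⊆ ℂ^{3(m+1)}`, the zero locus of `I_m^l`. -/
def Zml (m n l : ℕ) : Set (Pt m) := zl m (Iml m n l)

/-- A subset of `ℂ^{3(m+1)}` is irreducible with respect to the Zariski topology,
whose closed sets are exactly the zero loci of ideals of `R_m`. -/
def IsIrredSet (m : ℕ) (S : Set (Pt m)) : Prop :=
  S.Nonempty ∧
    ∀ I₁ I₂ : Ideal (R m), S ⊆ zl m I₁ ∪ zl m I₂ → S ⊆ zl m I₁ ∨ S ⊆ zl m I₂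

/- STATEMENT 9: for `n ≥ 2`, `m ≥ n`, `1 ≤ i < j ≤ n` with `j − i ≤ m − n` and
`m < 2n + 2`: `√(I_m^i + I_m^j) = ⋂_{u=0}^{m−n−(j−i)} L_{j+u, m−j−u+1, 2}`, these
ideals are prime and none of them contains another; consequently
`Z_m^i ∩ Z_m^j = ⋃_{u=0}^{m−n−(j−i)} V(L_{j+u, m−j−u+1, 2})` is the irreducible
decomposition of `Z_m^i ∩ Z_m^j`. -/
/-- the condition that variable `v` is among the generators of `Lpqr N p q r`. -/
def cnd {N : ℕ} (p q r : ℕ) (v : Fin 3 × Fin (N+1)) : Prop :=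
  (v.1 = 0 ∧ (v.2 : ℕ) < p) ∨ (v.1 = 1 ∧ (v.2 : ℕ) < q) ∨ (v.1 = 2 ∧ (v.2 : ℕ) < r)

open Classical in
def phi (N p q r : ℕ) : R N →ₐ[ℂ] R N :=
  aeval (fun v => if cnd p q r v then 0 else X v)

lemma X_mem_Lpqr {N p q r : ℕ} {v : Fin 3 × Fin (N+1)} (h : cnd p q r v) :
    X v ∈ Lpqr N p q r := by
  apply Ideal.subset_span
  obtain ⟨c, a⟩ := v
  rcases h with ⟨h1, h2⟩ | ⟨h1, h2⟩ | ⟨h1, h2⟩ <;> subst h1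
  · exact Or.inl (Or.inl ⟨a, h2, by simp [Xv, a.isLt]⟩)
  · exact Or.inl (Or.inr ⟨a, h2, by simp [Yv, a.isLt]⟩)
  · exact Or.inr ⟨a, h2, by simp [Zv, a.isLt]⟩

lemma Lpqr_le_ker {N p q r : ℕ} :
    Lpqr N p q r ≤ RingHom.ker (phi N p q r).toRingHom := by
  rw [Lpqr, Ideal.span_le]
  rintro g ((⟨a, ha, rfl⟩ | ⟨a, ha, rfl⟩) | ⟨a, ha, rfl⟩) <;>
    simp only [SetLike.mem_coe, RingHom.mem_ker, Xv, Yv, Zv] <;>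
    split <;>
    simp_all [phi, cnd, aeval_X]

lemma Lpqr_eq_ker {N p q r : ℕ} :
    Lpqr N p q r = RingHom.ker (phi N p q r).toRingHom := by
  refine le_antisymm Lpqr_le_ker ?_
  intro g hg
  have key : ∀ g : R N, g - phi N p q r g ∈ Lpqr N p q r := by
    intro g
    have : (Ideal.Quotient.mkₐ ℂ (Lpqr N p q r)).comp (phi N p q r)
        = Ideal.Quotient.mkₐ ℂ (Lpqr N p q r) := by
      apply MvPolynomial.algHom_ext
      intro v
      simp only [AlgHom.comp_apply, phi, aeval_X]
      split
      · rename_i h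
        rw [map_zero]
        exact (Ideal.Quotient.eq_zero_iff_mem.2 (X_mem_Lpqr h)).symm
      · rfl
    have h2 := congrArg (fun f => f g) this
    simpa [Ideal.Quotient.mkₐ_eq_mk, sub_eq_zero, Ideal.Quotient.eq] using h2.symm
  have := key g
  rw [RingHom.mem_ker] at hg
  simp only [AlgHom.toRingHom_eq_coe, RingHom.coe_coe] at hg
  rw [hg, sub_zero] at this
  exact this

lemma Lpqr_isPrime {N p q r : ℕ} : (Lpqr N p q r).IsPrime := by
  rw [Lpqr_eq_ker]
  exact RingHom.ker_isPrime _

lemma X_mem_Lpqr_iff {N p q r : ℕ} {v : Fin 3 × Fin (N+1)} :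
    X v ∈ Lpqr N p q r ↔ cnd p q r v := by
  constructor
  · intro h
    rw [Lpqr_eq_ker, RingHom.mem_ker] at h
    simp only [AlgHom.toRingHom_eq_coe, RingHom.coe_coe, phi, aeval_X] at h
    by_contra hc
    rw [if_neg hc] at h
    exact MvPolynomial.X_ne_zero v h
  · exact X_mem_Lpqr

lemma zl_eq_zeroLocus (m : ℕ) (I : Ideal (R m)) : zl m I = MvPolynomial.zeroLocus ℂ I := rfl

lemma mem_zl_iff {m : ℕ} {I : Ideal (R m)} {pt : Pt m} :
    pt ∈ zl m I ↔ I ≤ RingHom.ker (eval pt) := by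
  constructor
  · intro h g hg; exact h g hg
  · intro h g hg; exact h hg

lemma mem_zl_span_iff {m : ℕ} {S : Set (R m)} {pt : Pt m} :
    pt ∈ zl m (Ideal.span S) ↔ ∀ g ∈ S, eval pt g = 0 := by
  rw [mem_zl_iff, Ideal.span_le]
  rfl

lemma zl_sup {m : ℕ} (I J : Ideal (R m)) : zl m (I ⊔ J) = zl m I ∩ zl m J := by
  ext pt
  simp only [Set.mem_inter_iff, mem_zl_iff, sup_le_iff]

/-- value of the `c,i` coordinate, extended by zero. -/
def pc {m : ℕ} (pt : Pt m) (c : Fin 3) (i : ℕ) : ℂ :=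
  if h : i < m + 1 then pt (c, ⟨i, h⟩) else 0

/-- the polynomial `Σ_{i=0}^m pt(c,i) t^i` over ℂ. -/
def pser {m : ℕ} (pt : Pt m) (c : Fin 3) : Polynomial ℂ :=
  ∑ i ∈ Finset.range (m+1), Polynomial.C (pc pt c i) * Polynomial.X ^ i

lemma coeff_pser {m : ℕ} (pt : Pt m) (c : Fin 3) (a : ℕ) :
    (pser pt c).coeff a = pc pt c a := by
  rw [pser, Polynomial.finset_sum_coeff]
  simp only [Polynomial.coeff_C_mul, Polynomial.coeff_X_pow]
  by_cases h : a < m + 1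
  · rw [Finset.sum_eq_single a]
    · simp
    · intro b _ hb; simp [Ne.symm hb]
    · intro h'; exact absurd (Finset.mem_range.2 h) h'
  · rw [Finset.sum_eq_zero, pc, dif_neg h]
    intro b hb
    have : b ≠ a := by rintro rfl; exact h (Finset.mem_range.1 hb)
    rw [if_neg (Ne.symm this), mul_zero]

lemma eval_Xv {m : ℕ} (pt : Pt m) (i : ℕ) : eval pt (Xv m i) = pc pt 0 i := by
  rw [Xv, pc]; split <;> simp
lemma eval_Yv {m : ℕ} (pt : Pt m) (i : ℕ) : eval pt (Yv m i) = pc pt 1 i := by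
  rw [Yv, pc]; split <;> simp
lemma eval_Zv {m : ℕ} (pt : Pt m) (i : ℕ) : eval pt (Zv m i) = pc pt 2 i := by
  rw [Zv, pc]; split <;> simp

lemma map_xSer {m : ℕ} (pt : Pt m) :
    (xSer m 0).map (eval pt) = pser pt 0 := by
  rw [xSer, Polynomial.map_sum, pser, ← Nat.Ico_zero_eq_range, Finset.Ico_add_one_right_eq_Icc]
  refine Finset.sum_congr rfl fun i _ => ?_
  rw [Polynomial.map_mul, Polynomial.map_pow, Polynomial.map_C, Polynomial.map_X, eval_Xv]

lemma map_ySer {m : ℕ} (pt : Pt m) :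
    (ySer m 0).map (eval pt) = pser pt 1 := by
  rw [ySer, Polynomial.map_sum, pser, ← Nat.Ico_zero_eq_range, Finset.Ico_add_one_right_eq_Icc]
  refine Finset.sum_congr rfl fun i _ => ?_
  rw [Polynomial.map_mul, Polynomial.map_pow, Polynomial.map_C, Polynomial.map_X, eval_Yv]

lemma map_zSer {m : ℕ} (pt : Pt m) :
    (zSer m 0).map (eval pt) = pser pt 2 := by
  rw [zSer, Polynomial.map_sum, pser, ← Nat.Ico_zero_eq_range, Finset.Ico_add_one_right_eq_Icc]
  refine Finset.sum_congr rfl fun i _ => ?_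
  rw [Polynomial.map_mul, Polynomial.map_pow, Polynomial.map_C, Polynomial.map_X, eval_Zv]

lemma eval_fpqr {m n : ℕ} (pt : Pt m) (k : ℕ) :
    eval pt (fpqr m n 0 0 0 k) =
      (pser pt 0 * pser pt 1 - pser pt 2 ^ (n+1)).coeff k := by
  rw [fpqr, ← Polynomial.coeff_map]
  congr 1
  rw [Polynomial.map_sub, Polynomial.map_mul, Polynomial.map_pow, map_xSer, map_ySer, map_zSer]

lemma mem_zl_Lpqr_iff {m p q r : ℕ} {pt : Pt m} :
    pt ∈ zl m (Lpqr m p q r) ↔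
      (∀ a < p, pc pt 0 a = 0) ∧ (∀ b < q, pc pt 1 b = 0) ∧ (∀ c < r, pc pt 2 c = 0) := by
  rw [Lpqr, mem_zl_span_iff]
  constructor
  · intro h
    refine ⟨fun a ha => ?_, fun b hb => ?_, fun c hc => ?_⟩
    · rw [← eval_Xv]; exact h _ (Or.inl (Or.inl ⟨a, ha, rfl⟩))
    · rw [← eval_Yv]; exact h _ (Or.inl (Or.inr ⟨b, hb, rfl⟩))
    · rw [← eval_Zv]; exact h _ (Or.inr ⟨c, hc, rfl⟩)
  · rintro ⟨h1, h2, h3⟩ g ((⟨a, ha, rfl⟩ | ⟨a, ha, rfl⟩) | ⟨a, ha, rfl⟩)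
    · rw [eval_Xv]; exact h1 a ha
    · rw [eval_Yv]; exact h2 a ha
    · rw [eval_Zv]; exact h3 a ha

lemma mem_zl_Fideal_iff {m n : ℕ} {pt : Pt m} :
    pt ∈ zl m (Fideal m n) ↔
      ∀ k ≤ m, (pser pt 0 * pser pt 1 - pser pt 2 ^ (n+1)).coeff k = 0 := by
  rw [Fideal, mem_zl_span_iff]
  constructor
  · intro h k hk
    rw [← eval_fpqr]
    exact h _ ⟨k, hk, rfl⟩
  · rintro h g ⟨k, hk, rfl⟩
    rw [eval_fpqr]
    exact h k hk

lemma PQ_coeff_zero (P Q : Polynomial ℂ) (p' q' : ℕ)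
    (hx : ∀ a < p', P.coeff a = 0) (hy : ∀ b < q', Q.coeff b = 0)
    (k : ℕ) (hk : k < p' + q') : (P * Q).coeff k = 0 := by
  rw [Polynomial.coeff_mul]
  apply Finset.sum_eq_zero
  rintro ⟨a, b⟩ hab
  rw [Finset.HasAntidiagonal.mem_antidiagonal] at hab
  rcases lt_or_ge a p' with h | h
  · rw [hx a h, zero_mul]
  · rw [hy b (by omega), mul_zero]

lemma zpow_coeff_zero (Z : Polynomial ℂ) (e : ℕ)
    (hz0 : Z.coeff 0 = 0) (hz1 : Z.coeff 1 = 0) (k : ℕ) (hk : k < 2 * e) :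
    (Z ^ e).coeff k = 0 := by
  have h2 : Polynomial.X ^ 2 ∣ Z := by
    rw [Polynomial.X_pow_dvd_iff]
    intro d hd
    interval_cases d <;> assumption
  have : Polynomial.X ^ (2 * e) ∣ Z ^ e := by
    rw [pow_mul]
    exact pow_dvd_pow_of_dvd h2 e
  exact Polynomial.X_pow_dvd_iff.1 this k hk

lemma key_poly (n m i j : ℕ) (hn : 2 ≤ n) (hm : n ≤ m)
    (hi : 1 ≤ i) (hij : i < j) (hj : j ≤ n)
    (h1 : j - i ≤ m - n) (h2 : m < 2 * n + 2)
    (P Q Z : Polynomial ℂ)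
    (hx : ∀ a < j, P.coeff a = 0) (hy : ∀ b < n + 1 - i, Q.coeff b = 0)
    (hz0 : Z.coeff 0 = 0)
    (hf : ∀ k ≤ m, (P * Q - Z ^ (n + 1)).coeff k = 0) :
    Z.coeff 1 = 0 ∧ ∃ u ≤ m - n - (j - i),
      (∀ a < j + u, P.coeff a = 0) ∧ (∀ b < m - j - u + 1, Q.coeff b = 0) := by
  have hPQ1 : (P * Q).coeff (n + 1) = 0 := by
    rw [Polynomial.coeff_mul]
    apply Finset.sum_eq_zero
    rintro ⟨a, b⟩ hab
    rw [Finset.HasAntidiagonal.mem_antidiagonal] at hab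
    rcases lt_or_ge a j with h | h
    · rw [hx a h, zero_mul]
    · rw [hy b (by omega), mul_zero]
  have hZ1 : (Z ^ (n + 1)).coeff (n + 1) = 0 := by
    have := hf (n + 1) (by omega)
    rw [Polynomial.coeff_sub, hPQ1, zero_sub, neg_eq_zero] at this
    exact this
  obtain ⟨W, hW⟩ : Polynomial.X ∣ Z := Polynomial.X_dvd_iff.2 hz0
  have hz1 : Z.coeff 1 = 0 := by
    have hWc : W.coeff 0 = Z.coeff 1 := by rw [hW, Polynomial.coeff_X_mul]
    have : (Z ^ (n + 1)).coeff (n + 1) = (Z.coeff 1) ^ (n + 1) := by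
      have e0 : Z ^ (n + 1) = Polynomial.X ^ (n + 1) * W ^ (n + 1) := by rw [hW, mul_pow]
      have e1 : (Polynomial.X ^ (n+1) * W ^ (n+1)).coeff (0 + (n+1)) = (W ^ (n+1)).coeff 0 :=
        Polynomial.coeff_X_pow_mul _ _ _
      rw [zero_add] at e1
      rw [e0, e1, ← Polynomial.constantCoeff_apply, map_pow,
        Polynomial.constantCoeff_apply, hWc]
    rw [this] at hZ1
    exact pow_eq_zero_iff (by omega) |>.1 hZ1
  refine ⟨hz1, ?_⟩
  have hPQ : ∀ k ≤ m, (P * Q).coeff k = 0 := by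
    intro k hk
    have := hf k hk
    rw [Polynomial.coeff_sub, zpow_coeff_zero Z (n+1) hz0 hz1 k (by omega), sub_zero] at this
    exact this
  by_cases hex : ∃ a, a < m - n - (j - i) ∧ P.coeff (j + a) ≠ 0
  · classical
    obtain ⟨u, ⟨huU, huP⟩, humin⟩ := Nat.findX hex
    have hxall : ∀ a < j + u, P.coeff a = 0 := by
      intro a ha
      rcases lt_or_ge a j with h | h
      · exact hx a h
      · have := humin (a - j) (by omega)
        push_neg at this
        have := this (by omega)
        simpa [Nat.add_sub_cancel' h] using this
    have hyall : ∀ b, b ≤ m - j - u → Q.coeff b = 0 := by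
      intro b
      induction b using Nat.strong_induction_on with
      | _ b ih =>
        intro hb
        rcases lt_or_ge b (n + 1 - i) with hbq | hbq
        · exact hy b hbq
        · have hk : j + u + b ≤ m := by omega
          have h0 := hPQ (j + u + b) hk
          rw [Polynomial.coeff_mul, Finset.sum_eq_single (j + u, b)] at h0
          · rcases mul_eq_zero.1 h0 with h | h
            · exact absurd h huP
            · exact h
          · rintro ⟨a, b'⟩ hab hne
            rw [Finset.HasAntidiagonal.mem_antidiagonal] at hab
            rcases lt_or_ge a (j + u) with h | h
            · rw [hxall a h, zero_mul]
            · rcases eq_or_lt_of_le h with h' | h'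
              · exact absurd (by simp [← h']; omega) hne
              · rw [ih b' (by omega) (by omega), mul_zero]
          · intro h
            exact absurd ((Finset.HasAntidiagonal.mem_antidiagonal (n := j + u + b)).2 rfl) h
    exact ⟨u, by omega, hxall, fun b hb => hyall b (by omega)⟩
  · push_neg at hex
    refine ⟨m - n - (j - i), le_refl _, ?_, ?_⟩
    · intro a ha
      rcases lt_or_ge a j with h | h
      · exact hx a h
      · have := hex (a - j) (by omega)
        simpa [Nat.add_sub_cancel' h] using this
    · intro b hb
      exact hy b (by omega)

/-- key set-theoretic identity -/
lemma zl_inter_eq (n m i j : ℕ) (hn : 2 ≤ n) (hm : n ≤ m)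
    (hi : 1 ≤ i) (hij : i < j) (hj : j ≤ n)
    (h1 : j - i ≤ m - n) (h2 : m < 2 * n + 2) :
    Zml m n i ∩ Zml m n j =
      ⋃ u ∈ Finset.range (m - n - (j - i) + 1), zl m (Lpqr m (j + u) (m - j - u + 1) 2) := by
  ext pt
  simp only [Zml, Iml, Set.mem_inter_iff, zl_sup, mem_zl_Lpqr_iff, mem_zl_Fideal_iff,
    Set.mem_iUnion, Finset.mem_range]
  constructor
  · rintro ⟨⟨⟨hxi, hyi, hzi⟩, hFi⟩, ⟨hxj, hyj, hzj⟩, -⟩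
    have key := key_poly n m i j hn hm hi hij hj h1 h2
      (pser pt 0) (pser pt 1) (pser pt 2)
      (fun a ha => by rw [coeff_pser]; exact hxj a ha)
      (fun b hb => by rw [coeff_pser]; exact hyi b hb)
      (by rw [coeff_pser]; exact hzi 0 (by omega))
      hFi
    obtain ⟨hz1, u, hu, hxu, hyu⟩ := key
    refine ⟨u, by omega, ?_, ?_, ?_⟩
    · intro a ha; have := hxu a ha; rwa [coeff_pser] at this
    · intro b hb; have := hyu b hb; rwa [coeff_pser] at this
    · intro c hc
      interval_cases c
      · exact hzi 0 (by omega)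
      · rwa [coeff_pser] at hz1
  · rintro ⟨u, hu, hxu, hyu, hzu⟩
    have hu' : u ≤ m - n - (j - i) := by omega
    have hfvan : ∀ k ≤ m, (pser pt 0 * pser pt 1 - pser pt 2 ^ (n+1)).coeff k = 0 := by
      intro k hk
      rw [Polynomial.coeff_sub,
        PQ_coeff_zero _ _ (j + u) (m - j - u + 1)
          (fun a ha => by rw [coeff_pser]; exact hxu a ha)
          (fun b hb => by rw [coeff_pser]; exact hyu b hb) k (by omega),
        zpow_coeff_zero _ (n+1) (by rw [coeff_pser]; exact hzu 0 (by omega))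
          (by rw [coeff_pser]; exact hzu 1 (by omega)) k (by omega), sub_zero]
    refine ⟨⟨⟨?_, ?_, ?_⟩, hfvan⟩, ⟨?_, ?_, ?_⟩, hfvan⟩
    · intro a ha; exact hxu a (by omega)
    · intro b hb; exact hyu b (by omega)
    · intro c hc; exact hzu c (by omega)
    · intro a ha; exact hxu a (by omega)
    · intro b hb; exact hyu b (by omega)
    · intro c hc; exact hzu c (by omega)

lemma vanishingIdeal_biUnion {m : ℕ} (s : Finset ℕ) (S : ℕ → Set (Pt m)) :
    MvPolynomial.vanishingIdeal ℂ (⋃ u ∈ s, S u) =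
      ⨅ u ∈ s, MvPolynomial.vanishingIdeal ℂ (S u) := by
  ext g
  simp only [mem_vanishingIdeal_iff, Ideal.mem_iInf, Set.mem_iUnion]
  constructor
  · intro h u hu x hx
    exact h x ⟨u, hu, hx⟩
  · rintro h x ⟨u, hu, hx⟩
    exact h u hu x hx

lemma irred_of_prime {m : ℕ} (L : Ideal (R m)) (hL : L.IsPrime)
    (hne : (zl m L).Nonempty) : IsIrredSet m (zl m L) := by
  haveI := hL
  refine ⟨hne, fun I₁ I₂ hsub => ?_⟩
  by_contra hc
  push_neg at hc
  obtain ⟨hc1, hc2⟩ := hc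
  obtain ⟨p1, hp1S, hp1⟩ := Set.not_subset.1 hc1
  obtain ⟨p2, hp2S, hp2⟩ := Set.not_subset.1 hc2
  simp only [zl, Set.mem_setOf_eq, not_forall] at hp1 hp2
  obtain ⟨g₁, hg₁I, hg₁⟩ := hp1
  obtain ⟨g₂, hg₂I, hg₂⟩ := hp2
  have hmem : g₁ * g₂ ∈ MvPolynomial.vanishingIdeal ℂ (MvPolynomial.zeroLocus ℂ L) := by
    rw [mem_vanishingIdeal_iff]
    intro x hx
    rcases hsub hx with h | h
    · change eval x (g₁ * g₂) = 0
      rw [map_mul, h g₁ hg₁I, zero_mul]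
    · change eval x (g₁ * g₂) = 0
      rw [map_mul, h g₂ hg₂I, mul_zero]
  rw [MvPolynomial.IsPrime.vanishingIdeal_zeroLocus L] at hmem
  rcases hL.mem_or_mem hmem with h | h
  · exact hg₁ (hp1S g₁ h)
  · exact hg₂ (hp2S g₂ h)

lemma zero_mem_zl_Lpqr {m p q r : ℕ} : (fun _ => 0 : Pt m) ∈ zl m (Lpqr m p q r) := by
  rw [mem_zl_Lpqr_iff]
  refine ⟨fun a _ => ?_, fun b _ => ?_, fun c _ => ?_⟩ <;> (rw [pc]; split <;> rfl)

lemma not_le_Lpqr (m n i j u v : ℕ) (hn : 2 ≤ n) (hm : n ≤ m)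
    (hi : 1 ≤ i) (hij : i < j) (hj : j ≤ n) (h1 : j - i ≤ m - n)
    (hu : u ≤ m - n - (j - i)) (hv : v ≤ m - n - (j - i)) (huv : u ≠ v) :
    ¬ Lpqr m (j + u) (m - j - u + 1) 2 ≤ Lpqr m (j + v) (m - j - v + 1) 2 := by
  intro hle
  rcases Nat.lt_or_ge u v with h | h
  · -- y_{m-j-u} belongs to L_u but not L_v
    have hidx : m - j - u < m + 1 := by omega
    have hmem : X (1, ⟨m - j - u, hidx⟩) ∈ Lpqr m (j + u) (m - j - u + 1) 2 :=
      X_mem_Lpqr (Or.inr (Or.inl ⟨rfl, by simp⟩))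
    have := X_mem_Lpqr_iff.1 (hle hmem)
    unfold cnd at this
    rcases this with ⟨h', -⟩ | ⟨-, h'⟩ | ⟨h', -⟩
    · simp at h'
    · simp only [Fin.val_mk] at h'; omega
    · simp at h'
  · -- x_{j+u-1} belongs to L_u but not L_v
    have hlt : v < u := by omega
    have hidx : j + u - 1 < m + 1 := by omega
    have hmem : X (0, ⟨j + u - 1, hidx⟩) ∈ Lpqr m (j + u) (m - j - u + 1) 2 :=
      X_mem_Lpqr (Or.inl ⟨rfl, by simp; omega⟩)
    have := X_mem_Lpqr_iff.1 (hle hmem)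
    unfold cnd at this
    rcases this with ⟨-, h'⟩ | ⟨h', -⟩ | ⟨h', -⟩
    · simp only [Fin.val_mk] at h'; omega
    · simp at h'
    · simp at h'

theorem stmt9 (n m : ℕ) (hn : 2 ≤ n) (hm : n ≤ m) (i j : ℕ)
    (hi : 1 ≤ i) (hij : i < j) (hj : j ≤ n)
    (h1 : j - i ≤ m - n) (h2 : m < 2 * n + 2) :
    (Iml m n i ⊔ Iml m n j).radical =
      (⨅ u ∈ Finset.range (m - n - (j - i) + 1), Lpqr m (j + u) (m - j - u + 1) 2) ∧
    (∀ u ≤ m - n - (j - i), (Lpqr m (j + u) (m - j - u + 1) 2).IsPrime) ∧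
    (∀ u ≤ m - n - (j - i), ∀ v ≤ m - n - (j - i), u ≠ v →
      ¬ Lpqr m (j + u) (m - j - u + 1) 2 ≤ Lpqr m (j + v) (m - j - v + 1) 2) ∧
    Zml m n i ∩ Zml m n j =
      (⋃ u ∈ Finset.range (m - n - (j - i) + 1), zl m (Lpqr m (j + u) (m - j - u + 1) 2)) ∧
    (∀ u ≤ m - n - (j - i), IsIrredSet m (zl m (Lpqr m (j + u) (m - j - u + 1) 2))) ∧
    (∀ u ≤ m - n - (j - i), ∀ v ≤ m - n - (j - i), u ≠ v →
      ¬ zl m (Lpqr m (j + u) (m - j - u + 1) 2) ⊆ zl m (Lpqr m (j + v) (m - j - v + 1) 2)) := by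
  have hset := zl_inter_eq n m i j hn hm hi hij hj h1 h2
  have hvi : ∀ p q r : ℕ, MvPolynomial.vanishingIdeal ℂ (zl m (Lpqr m p q r)) = Lpqr m p q r := by
    intro p q r
    haveI : (Lpqr m p q r).IsPrime := Lpqr_isPrime
    rw [zl_eq_zeroLocus]
    exact MvPolynomial.IsPrime.vanishingIdeal_zeroLocus _
  refine ⟨?_, fun u _ => Lpqr_isPrime, ?_, hset, ?_, ?_⟩
  · -- radical
    rw [← MvPolynomial.vanishingIdeal_zeroLocus_eq_radical (K := ℂ), ← zl_eq_zeroLocus, zl_sup]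
    have : zl m (Iml m n i) ∩ zl m (Iml m n j) = Zml m n i ∩ Zml m n j := rfl
    rw [this, hset, vanishingIdeal_biUnion]
    exact iInf_congr fun u => iInf_congr fun _ => hvi _ _ _
  · intro u hu v hv huv
    exact not_le_Lpqr m n i j u v hn hm hi hij hj h1 hu hv huv
  · intro u hu
    exact irred_of_prime _ Lpqr_isPrime ⟨_, zero_mem_zl_Lpqr⟩
  · intro u hu v hv huv hsub
    have h1' : Lpqr m (j + v) (m - j - v + 1) 2 ≤ Lpqr m (j + u) (m - j - u + 1) 2 := by
      rw [← hvi (j + v) (m - j - v + 1) 2, ← hvi (j + u) (m - j - u + 1) 2]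
      exact MvPolynomial.vanishingIdeal_anti_mono hsub
    exact not_le_Lpqr m n i j v u hn hm hi hij hj h1 hv hu (Ne.symm huv) h1'

end
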